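/- Let Γ : ℝ≥0^n → ℝ≥0^n be a continuous MAX-preserving map built from continuous non-decreasing gains γ_{i,j} with γ_{i,j}(0)=0, satisfying the cyclic small-gain conditions. Then for every x ∈ ℝ≥0^n, the iterates satisfy Γ^(k)(x) ≤ Q(x) := MAX{x, Γ(x), …, Γ^(n-1)(x)} for all k ≥ 1, and Γ^(k)(x) → 0 as k → ∞. -/

import Mathlib

open scoped NNReal

/-- The composition `γ_{i₁,i₂} ∘ γ_{i₂,i₃} ∘ ⋯ ∘ γ_{i_r,i₁}` along the cycle
given by the list `l = [i₁, …, i_r]`. -/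
def cycleGain {n : ℕ} (γ : Fin n → Fin n → ℝ≥0 → ℝ≥0) (l : List (Fin n)) :
    ℝ≥0 → ℝ≥0 :=
  ((l.zip (l.rotate 1)).map fun p => γ p.1 p.2).foldr (· ∘ ·) id

/-- `γ` satisfies the cyclic small-gain conditions: the gain along every cycle of
pairwise distinct indices (including the trivial cycles `γ_{i,i}`) is strictly
below the identity on `(0,∞)`. -/
def CyclicSmallGain {n : ℕ} (γ : Fin n → Fin n → ℝ≥0 → ℝ≥0) : Prop :=
  ∀ l : List (Fin n), l.Nodup → l ≠ [] → ∀ s : ℝ≥0, 0 < s → cycleGain γ l s < s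


namespace SGAux
variable {n : ℕ} (γ : Fin n → Fin n → ℝ≥0 → ℝ≥0)

def chain : Fin n → List (Fin n) → ℝ≥0 → ℝ≥0
  | _, [], s => s
  | i, j :: l, s => γ i j (chain j l s)

def pathVal (x : Fin n → ℝ≥0) : Fin n → List (Fin n) → ℝ≥0
  | i, [] => x i
  | i, j :: l => γ i j (pathVal x j l)

variable {γ}

lemma chain_zero (hzero : ∀ i j, γ i j 0 = 0) :
    ∀ (l : List (Fin n)) (i : Fin n), chain γ i l 0 = 0 := by
  intro l
  induction l with
  | nil => intro i; rfl
  | cons j t ih => intro i; simp [chain, ih j, hzero]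

lemma chain_mono (hmono : ∀ i j, Monotone (γ i j)) :
    ∀ (l : List (Fin n)) (i : Fin n), Monotone (chain γ i l) := by
  intro l
  induction l with
  | nil => intro i a b h; exact h
  | cons j t ih => intro i a b h; exact hmono i j (ih j h)

lemma chain_append (u : List (Fin n)) :
    ∀ (i j : Fin n) (v : List (Fin n)) (s : ℝ≥0),
      chain γ i (u ++ j :: v) s = chain γ i (u ++ [j]) (chain γ j v s) := by
  induction u with
  | nil => intro i j v s; rfl
  | cons a t ih => intro i j v s; simp only [List.cons_append, chain]; exact congrArg (γ i a) (ih a j v s)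

lemma chain_eq_cycleGain :
    ∀ (l : List (Fin n)) (i j : Fin n) (s : ℝ≥0),
      ((((i :: l).zip (l ++ [j])).map fun p => γ p.1 p.2).foldr (· ∘ ·) id) s
        = chain γ i (l ++ [j]) s := by
  intro l
  induction l with
  | nil => intro i j s; rfl
  | cons a t ih => intro i j s; simp only [List.cons_append, List.zip_cons_cons,
      List.map_cons, List.foldr_cons, Function.comp_apply, chain, ih]

lemma cycleGain_eq_chain (l : List (Fin n)) (i : Fin n) (s : ℝ≥0) :
    cycleGain γ (i :: l) s = chain γ i (l ++ [i]) s := by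
  rw [cycleGain, List.rotate_cons_succ, List.rotate_zero]
  exact chain_eq_cycleGain l i i s

lemma exists_dup {α : Type*} : ∀ (l : List α), ¬ l.Nodup →
    ∃ a l₁ l₂, l = l₁ ++ a :: l₂ ∧ a ∈ l₂ := by
  intro l
  induction l with
  | nil => intro h; exact absurd List.nodup_nil h
  | cons b t ih =>
    intro h
    rw [List.nodup_cons] at h
    by_cases hb : b ∈ t
    · exact ⟨b, [], t, rfl, hb⟩
    · have ht : ¬ t.Nodup := fun hnd => h ⟨hb, hnd⟩
      obtain ⟨a, l₁, l₂, rfl, ha⟩ := ih ht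
      exact ⟨a, b :: l₁, l₂, rfl, ha⟩

lemma chain_closed_lt (hmono : ∀ i j, Monotone (γ i j)) (hzero : ∀ i j, γ i j 0 = 0)
    (hsg : CyclicSmallGain γ) :
    ∀ (N : ℕ) (l : List (Fin n)), l.length ≤ N →
      ∀ (i : Fin n) (s : ℝ≥0), 0 < s → chain γ i (l ++ [i]) s < s := by
  intro N
  induction N with
  | zero =>
    intro l hl i s hs
    have hl0 : l = [] := List.length_eq_zero_iff.mp (Nat.le_zero.mp hl)
    subst hl0
    rw [← cycleGain_eq_chain]
    exact hsg [i] (List.nodup_singleton i) (by simp) s hs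
  | succ N ih =>
    intro l hl i s hs
    by_cases hmem : i ∈ l
    · obtain ⟨l₁, l₂, rfl⟩ := List.append_of_mem hmem
      have hlen : l₁.length ≤ N ∧ l₂.length ≤ N := by
        simp [List.length_append] at hl ⊢; omega
      have e : (l₁ ++ i :: l₂) ++ [i] = l₁ ++ i :: (l₂ ++ [i]) := by simp
      rw [e, chain_append]
      rcases eq_zero_or_pos (chain γ i (l₂ ++ [i]) s) with h0 | hpos
      · rw [h0, chain_zero hzero]; exact hs
      · exact lt_trans (ih l₁ hlen.1 i _ hpos) (ih l₂ hlen.2 i s hs)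
    · by_cases hnd : l.Nodup
      · rw [← cycleGain_eq_chain]
        exact hsg (i :: l) (List.nodup_cons.mpr ⟨hmem, hnd⟩) (by simp) s hs
      · obtain ⟨a, l₁, m, rfl, ha⟩ := exists_dup l hnd
        obtain ⟨l₃, l₄, rfl⟩ := List.append_of_mem ha
        have hlen : l₃.length ≤ N ∧ (l₁ ++ a :: l₄).length ≤ N := by
          simp [List.length_append] at hl ⊢; omega
        have e1 : (l₁ ++ a :: (l₃ ++ a :: l₄)) ++ [i]
            = l₁ ++ a :: ((l₃ ++ a :: l₄) ++ [i]) := by simp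
        rw [e1, chain_append]
        have e2 : (l₃ ++ a :: l₄) ++ [i] = l₃ ++ a :: (l₄ ++ [i]) := by simp
        have hin : chain γ a ((l₃ ++ a :: l₄) ++ [i]) s ≤ chain γ a (l₄ ++ [i]) s := by
          rw [e2, chain_append]
          rcases eq_zero_or_pos (chain γ a (l₄ ++ [i]) s) with h0 | hpos
          · rw [h0, chain_zero hzero]
          · exact (ih l₃ hlen.1 a _ hpos).le
        have e3 : (l₁ ++ a :: l₄) ++ [i] = l₁ ++ a :: (l₄ ++ [i]) := by simp
        have e4 : chain γ i ((l₁ ++ a :: l₄) ++ [i]) s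
            = chain γ i (l₁ ++ [a]) (chain γ a (l₄ ++ [i]) s) := by
          rw [e3]; exact chain_append l₁ i a (l₄ ++ [i]) s
        calc chain γ i (l₁ ++ [a]) (chain γ a ((l₃ ++ a :: l₄) ++ [i]) s)
            ≤ chain γ i (l₁ ++ [a]) (chain γ a (l₄ ++ [i]) s) :=
              chain_mono hmono _ _ hin
          _ = chain γ i ((l₁ ++ a :: l₄) ++ [i]) s := e4.symm
          _ < s := ih (l₁ ++ a :: l₄) hlen.2 i s hs

lemma chain_closed_le (hmono : ∀ i j, Monotone (γ i j)) (hzero : ∀ i j, γ i j 0 = 0)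
    (hsg : CyclicSmallGain γ) (l : List (Fin n)) (i : Fin n) (s : ℝ≥0) :
    chain γ i (l ++ [i]) s ≤ s := by
  rcases eq_zero_or_pos s with rfl | hs
  · rw [chain_zero hzero]
  · exact (chain_closed_lt hmono hzero hsg l.length l le_rfl i s hs).le


lemma pathVal_append (u : List (Fin n)) {x : Fin n → ℝ≥0} :
    ∀ (i j : Fin n) (v : List (Fin n)),
      pathVal γ x i (u ++ j :: v) = chain γ i (u ++ [j]) (pathVal γ x j v) := by
  induction u with
  | nil => intro i j v; rfl
  | cons a t ih =>
    intro i j v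
    simp only [List.cons_append, pathVal, chain]
    exact congrArg (γ i a) (ih a j v)

variable {Γ : (Fin n → ℝ≥0) → (Fin n → ℝ≥0)} {x : Fin n → ℝ≥0}

lemma pathVal_le_iterate (hmono : ∀ i j, Monotone (γ i j))
    (hΓ : ∀ x i, Γ x i = Finset.univ.sup fun j : Fin n => γ i j (x j)) :
    ∀ (p : List (Fin n)) (i : Fin n), pathVal γ x i p ≤ Γ^[p.length] x i := by
  intro p
  induction p with
  | nil => intro i; exact le_refl _
  | cons j t ih =>
    intro i
    calc pathVal γ x i (j :: t) = γ i j (pathVal γ x j t) := rfl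
      _ ≤ γ i j (Γ^[t.length] x j) := hmono i j (ih j)
      _ ≤ Finset.univ.sup (fun j' => γ i j' (Γ^[t.length] x j')) :=
          Finset.le_sup (f := fun j' => γ i j' (Γ^[t.length] x j')) (Finset.mem_univ j)
      _ = Γ (Γ^[t.length] x) i := (hΓ _ i).symm
      _ = Γ^[(j :: t).length] x i := by
          rw [List.length_cons, Function.iterate_succ_apply']

lemma exists_path (hn : 0 < n)
    (hΓ : ∀ x i, Γ x i = Finset.univ.sup fun j : Fin n => γ i j (x j)) :
    ∀ (k : ℕ) (i : Fin n), ∃ p : List (Fin n),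
      p.length = k ∧ Γ^[k] x i = pathVal γ x i p := by
  intro k
  induction k with
  | zero => intro i; exact ⟨[], rfl, rfl⟩
  | succ k ih =>
    intro i
    have hne : (Finset.univ : Finset (Fin n)).Nonempty := ⟨⟨0, hn⟩, Finset.mem_univ _⟩
    obtain ⟨j, -, hj⟩ := Finset.exists_mem_eq_sup Finset.univ hne
      (fun j => γ i j (Γ^[k] x j))
    obtain ⟨p, hp, he⟩ := ih j
    refine ⟨j :: p, by simp [hp], ?_⟩
    rw [Function.iterate_succ_apply', hΓ, hj, he]; rfl

lemma reduce (hmono : ∀ i j, Monotone (γ i j)) (hzero : ∀ i j, γ i j 0 = 0)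
    (hsg : CyclicSmallGain γ) :
    ∀ (N : ℕ) (p : List (Fin n)), p.length ≤ N → ∀ i : Fin n,
      ∃ q : List (Fin n), (∀ a ∈ q, a ∈ p) ∧ (i :: q).Nodup ∧
        pathVal γ x i p ≤ pathVal γ x i q := by
  intro N
  induction N with
  | zero =>
    intro p hp i
    have hp0 : p = [] := List.length_eq_zero_iff.mp (Nat.le_zero.mp hp)
    subst hp0
    exact ⟨[], by simp, List.nodup_singleton i, le_refl _⟩
  | succ N ih =>
    intro p hp i
    by_cases hmem : i ∈ p
    · obtain ⟨p₁, p₂, rfl⟩ := List.append_of_mem hmem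
      have hlen : p₂.length ≤ N := by
        simp [List.length_append] at hp; omega
      obtain ⟨q, hsub, hnd, hle⟩ := ih p₂ hlen i
      refine ⟨q, fun a ha => by simp [hsub a ha], hnd, ?_⟩
      calc pathVal γ x i (p₁ ++ i :: p₂)
          = chain γ i (p₁ ++ [i]) (pathVal γ x i p₂) := pathVal_append p₁ i i p₂
        _ ≤ pathVal γ x i p₂ := chain_closed_le hmono hzero hsg p₁ i _
        _ ≤ pathVal γ x i q := hle
    · match p, hp with
      | [], _ => exact ⟨[], by simp, List.nodup_singleton i, le_refl _⟩
      | j :: t, hp =>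
        have hlen : t.length ≤ N := by simp at hp; omega
        obtain ⟨q, hsub, hnd, hle⟩ := ih t hlen j
        have hisub : ∀ a ∈ j :: q, a ∈ j :: t := by
          intro a ha
          rcases List.mem_cons.mp ha with rfl | ha
          · exact List.mem_cons_self
          · exact List.mem_cons_of_mem _ (hsub a ha)
        refine ⟨j :: q, hisub, ?_, hmono i j hle⟩
        exact List.nodup_cons.mpr ⟨fun hc => hmem (hisub i hc), hnd⟩

lemma iterate_le_Q (hn : 0 < n) (hmono : ∀ i j, Monotone (γ i j))
    (hzero : ∀ i j, γ i j 0 = 0) (hsg : CyclicSmallGain γ)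
    (hΓ : ∀ x i, Γ x i = Finset.univ.sup fun j : Fin n => γ i j (x j))
    {Q : (Fin n → ℝ≥0) → (Fin n → ℝ≥0)}
    (hQ : ∀ z, Q z = (Finset.range n).sup fun k => Γ^[k] z) :
    ∀ k : ℕ, Γ^[k] x ≤ Q x := by
  intro k i
  obtain ⟨p, hp, he⟩ := exists_path (γ := γ) hn hΓ k i
  obtain ⟨q, -, hnodup, hle⟩ := reduce (x := x) hmono hzero hsg p.length p le_rfl i
  have h1 : q.length < n := by
    have h2 := List.Nodup.length_le_card hnodup
    simpa using h2
  calc Γ^[k] x i = pathVal γ x i p := he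
    _ ≤ pathVal γ x i q := hle
    _ ≤ Γ^[q.length] x i := pathVal_le_iterate hmono hΓ q i
    _ ≤ Q x i := by
        rw [hQ]
        exact Pi.le_def.mp (Finset.le_sup (f := fun k => Γ^[k] x)
          (Finset.mem_range.mpr h1)) i


lemma fixed_le_zero (hn : 0 < n) (hmono : ∀ i j, Monotone (γ i j))
    (hzero : ∀ i j, γ i j 0 = 0) (hsg : CyclicSmallGain γ)
    {L : Fin n → ℝ≥0} (hL : ∀ i, L i ≤ Finset.univ.sup fun j => γ i j (L j)) :
    L = 0 := by
  by_contra hne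
  have hex : ∃ i, 0 < L i := by
    by_contra h; push_neg at h
    exact hne (funext fun i => le_antisymm (by simpa using h i) zero_le)
  obtain ⟨i₀, hi₀⟩ := hex
  have hne' : (Finset.univ : Finset (Fin n)).Nonempty := ⟨⟨0, hn⟩, Finset.mem_univ _⟩
  have key : ∀ i : {i : Fin n // 0 < L i}, ∃ j : {i : Fin n // 0 < L i},
      L i.1 ≤ γ i.1 j.1 (L j.1) := by
    intro i
    obtain ⟨j, -, hj⟩ := Finset.exists_mem_eq_sup Finset.univ hne' (fun j => γ i.1 j (L j))
    have h1 : L i.1 ≤ γ i.1 j (L j) := (hL i.1).trans_eq hj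
    have hjpos : 0 < L j := by
      rcases eq_zero_or_pos (L j) with h0 | h
      · rw [h0, hzero] at h1
        exact absurd (lt_of_lt_of_le i.2 h1) (lt_irrefl 0)
      · exact h
    exact ⟨⟨j, hjpos⟩, h1⟩
  choose f hf using key
  set g : ℕ → {i : Fin n // 0 < L i} := fun m => f^[m] ⟨i₀, hi₀⟩ with hg
  have hstep : ∀ m : ℕ, L (g m).1 ≤ γ (g m).1 (g (m+1)).1 (L (g (m+1)).1) := by
    intro m
    have h2 : g (m+1) = f (g m) := Function.iterate_succ_apply' f m _
    rw [h2]; exact hf (g m)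
  have hchain : ∀ (d a : ℕ), L (g a).1 ≤
      chain γ (g a).1 ((List.range' (a+1) d).map fun m => (g m).1) (L (g (a+d)).1) := by
    intro d
    induction d with
    | zero => intro a; simp [chain]
    | succ d ihd =>
      intro a
      rw [List.range'_succ]
      simp only [List.map_cons, chain]
      have e : a + 1 + d = a + (d + 1) := by omega
      calc L (g a).1 ≤ γ (g a).1 (g (a+1)).1 (L (g (a+1)).1) := hstep a
        _ ≤ γ (g a).1 (g (a+1)).1 (chain γ (g (a+1)).1
              ((List.range' (a+1+1) d).map fun m => (g m).1) (L (g (a+1+d)).1)) :=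
            hmono _ _ (ihd (a+1))
        _ = _ := by rw [e]
  have habs : ∀ a b : ℕ, a < b → (g a).1 = (g b).1 → False := by
    intro a b hab he
    have h1 := hchain ((b-a-1)+1) a
    have e3 : a + (b - a - 1 + 1) = b := by omega
    rw [e3] at h1
    rw [List.range'_concat, List.map_append] at h1
    have e2 : a + 1 + 1 * (b - a - 1) = b := by omega
    rw [e2] at h1
    simp only [List.map_cons, List.map_nil] at h1
    rw [← he] at h1
    have h4 := chain_closed_lt hmono hzero hsg
      ((List.range' (a+1) (b-a-1)).map fun m => (g m).1).length
      ((List.range' (a+1) (b-a-1)).map fun m => (g m).1) le_rfl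
      (g a).1 (L (g a).1) (g a).2
    exact absurd (h1.trans_lt h4) (lt_irrefl _)
  obtain ⟨m₁, m₂, hne2, heq⟩ := Fintype.exists_ne_map_eq_of_card_lt
    (fun m : Fin (n+1) => (g m.1).1) (by simp)
  rcases lt_or_gt_of_ne hne2 with hlt | hlt
  · exact habs m₁.1 m₂.1 hlt heq
  · exact habs m₂.1 m₁.1 hlt heq.symm


lemma gamma_sup (hmono : ∀ i j, Monotone (γ i j)) (hzero : ∀ i j, γ i j 0 = 0)
    {ι : Type*} (s : Finset ι) (i j : Fin n) (f : ι → ℝ≥0) :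
    γ i j (s.sup f) = s.sup fun k => γ i j (f k) :=
  Finset.comp_sup_eq_sup_comp (γ i j) (fun a b => (hmono i j).map_sup a b)
    (by simpa using hzero i j)

lemma Q_comm (hmono : ∀ i j, Monotone (γ i j)) (hzero : ∀ i j, γ i j 0 = 0)
    (hΓ : ∀ x i, Γ x i = Finset.univ.sup fun j : Fin n => γ i j (x j))
    {Q : (Fin n → ℝ≥0) → (Fin n → ℝ≥0)}
    (hQ : ∀ z, Q z = (Finset.range n).sup fun k => Γ^[k] z)
    (z : Fin n → ℝ≥0) : Q (Γ z) = Γ (Q z) := by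
  funext i
  rw [hQ, Finset.sup_apply, hΓ]
  calc (Finset.range n).sup (fun k => Γ^[k] (Γ z) i)
      = (Finset.range n).sup fun k => Γ (Γ^[k] z) i := by
        refine Finset.sup_congr rfl fun k _ => ?_
        rw [← Function.iterate_succ_apply, Function.iterate_succ_apply']
    _ = (Finset.range n).sup fun k => Finset.univ.sup fun j => γ i j (Γ^[k] z j) := by
        refine Finset.sup_congr rfl fun k _ => ?_
        rw [hΓ]
    _ = Finset.univ.sup fun j => (Finset.range n).sup fun k => γ i j (Γ^[k] z j) :=
        Finset.sup_comm _ _ _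
    _ = Finset.univ.sup fun j => γ i j (Q z j) := by
        refine Finset.sup_congr rfl fun j _ => ?_
        rw [hQ, Finset.sup_apply, gamma_sup hmono hzero]

lemma tendsto_finset_sup {ι : Type*} (s : Finset ι) (f : ι → ℕ → ℝ≥0) (a : ι → ℝ≥0)
    (h : ∀ i ∈ s, Filter.Tendsto (f i) Filter.atTop (nhds (a i))) :
    Filter.Tendsto (fun k => s.sup fun i => f i k) Filter.atTop (nhds (s.sup a)) := by
  induction s using Finset.cons_induction with
  | empty => simpa using tendsto_const_nhds
  | cons i s hi ih =>
    simp only [Finset.sup_cons]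
    exact (h i (Finset.mem_cons_self i s)).max
      (ih fun j hj => h j (Finset.mem_cons_of_mem hj))

end SGAux

theorem iterates_le_Q_and_tendsto_zero {n : ℕ} (hn : 0 < n)
    (γ : Fin n → Fin n → ℝ≥0 → ℝ≥0)
    (hmono : ∀ i j, Monotone (γ i j)) (hcont : ∀ i j, Continuous (γ i j))
    (hzero : ∀ i j, γ i j 0 = 0)
    (Γ : (Fin n → ℝ≥0) → (Fin n → ℝ≥0))
    (hΓ : ∀ x i, Γ x i = Finset.univ.sup fun j : Fin n => γ i j (x j))
    (hsg : CyclicSmallGain γ)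
    (Q : (Fin n → ℝ≥0) → (Fin n → ℝ≥0))
    (hQ : ∀ z, Q z = (Finset.range n).sup fun k => Γ^[k] z)
    (x : Fin n → ℝ≥0) :
    (∀ k : ℕ, 1 ≤ k → Γ^[k] x ≤ Q x) ∧
      Filter.Tendsto (fun k : ℕ => Γ^[k] x) Filter.atTop (nhds 0) := by

  have hpart1 : ∀ (z : Fin n → ℝ≥0) (k : ℕ), Γ^[k] z ≤ Q z :=
    fun z k => SGAux.iterate_le_Q hn hmono hzero hsg hΓ hQ k
  refine ⟨fun k _ => hpart1 x k, ?_⟩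
  set w : ℕ → Fin n → ℝ≥0 := fun k => Q (Γ^[k] x) with hw
  have hw_succ : ∀ k, w (k+1) = Γ (w k) := by
    intro k
    show Q (Γ^[k+1] x) = Γ (Q (Γ^[k] x))
    rw [Function.iterate_succ_apply', SGAux.Q_comm hmono hzero hΓ hQ]
  have hw_anti : ∀ k, w (k+1) ≤ w k := by
    intro k
    rw [hw_succ, ← SGAux.Q_comm hmono hzero hΓ hQ]
    show Q (Γ (Γ^[k] x)) ≤ Q (Γ^[k] x)
    rw [hQ (Γ (Γ^[k] x))]
    refine Finset.sup_le fun m _ => ?_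
    rw [← Function.iterate_succ_apply]
    exact hpart1 (Γ^[k] x) (m+1)
  set L : Fin n → ℝ≥0 := fun i => ⨅ k, w k i with hLdef
  have hanti : ∀ i, Antitone fun k => w k i :=
    fun i => antitone_nat_of_succ_le fun k => hw_anti k i
  have htendsL : ∀ i, Filter.Tendsto (fun k => w k i) Filter.atTop (nhds (L i)) :=
    fun i => tendsto_atTop_ciInf (hanti i) (OrderBot.bddBelow _)
  have hΓL : ∀ i, (Finset.univ.sup fun j => γ i j (L j)) = L i := by
    intro i
    have h1 : Filter.Tendsto (fun k => w (k+1) i) Filter.atTop (nhds (L i)) :=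
      (htendsL i).comp (Filter.tendsto_add_atTop_nat 1)
    have h2 : Filter.Tendsto (fun k => w (k+1) i) Filter.atTop
        (nhds (Finset.univ.sup fun j => γ i j (L j))) := by
      refine Filter.Tendsto.congr (fun k => ?_) (SGAux.tendsto_finset_sup Finset.univ
        (fun j k => γ i j (w k j)) (fun j => γ i j (L j))
        (fun j _ => ((hcont i j).tendsto (L j)).comp (htendsL j)))
      rw [hw_succ, hΓ]
    exact tendsto_nhds_unique h2 h1
  have hL0 : L = 0 := SGAux.fixed_le_zero hn hmono hzero hsg fun i => (hΓL i).ge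
  rw [tendsto_pi_nhds]
  intro i
  simp only [Pi.zero_apply]
  have hb : ∀ k, Γ^[k] x i ≤ w k i := fun k =>
    Pi.le_def.mp (hpart1 (Γ^[k] x) 0) i
  have hLi : L i = 0 := by rw [hL0]; rfl
  exact tendsto_of_tendsto_of_tendsto_of_le_of_le tendsto_const_nhds
    (hLi ▸ htendsL i) (fun k => zero_le) hb
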